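/- Fix an integer m ≥ 2, and for each integer n ≥ 1 let Z_n(m) denote the number of multichains e_1 ≤ e_2 ≤ ⋯ ≤ e_{m-1} in the poset P_{t_n}. Then in the ring of formal power series ℚ[[s]] one has the identity (1 - m·s)^m · (1 + ∑_{n ≥ 1} Z_n(m) s^n) = (1 + s - m·s)^m. -/

import Mathlib

/-- The poset `P_{t_n}`: lattice points `a ∈ ℕ^n` with `a i ≤ 1` for the first
`n - 1` coordinates and total coordinate sum at most `n`, ordered coordinatewise. -/
def Ptn (n : ℕ) : Set (Fin n → ℕ) :=
  {a | (∀ i : Fin n, (i : ℕ) < n - 1 → a i ≤ 1) ∧ ∑ i, a i ≤ n}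

/-- The number `Z_n(m)` of multichains `e₁ ≤ ⋯ ≤ e_{m-1}` in `P_{t_n}`. -/
noncomputable def Zcount (n m : ℕ) : ℕ :=
  Nat.card {e : Fin (m - 1) → (Fin n → ℕ) // Monotone e ∧ ∀ k, e k ∈ Ptn n}

open Finset PowerSeries

namespace Stmt1Aux


/-- coefficient `h_{m,d}(k) = ∑_{r ≤ k} C(k,r) (m-1)^r C(k-r+d, k-r+1)` -/
noncomputable def hc (m d k : ℕ) : ℚ :=
  ∑ r ∈ Finset.range (k+1),
    (k.choose r : ℚ) * ((m:ℚ)-1)^r * ((k - r + d).choose (k - r + 1) : ℚ)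

noncomputable def Fser (m d : ℕ) : PowerSeries ℚ :=
  PowerSeries.mk (fun n => if n = 0 then 1 else hc m d (n-1))

lemma hc_zero (m k : ℕ) : hc m 0 k = 0 := by
  unfold hc
  apply Finset.sum_eq_zero
  intro r _
  rw [Nat.add_zero, Nat.choose_eq_zero_of_lt (Nat.lt_succ_self _)]
  simp

lemma hc_k_zero (m d : ℕ) : hc m d 0 = d := by
  simp [hc, Nat.choose_one_right]

lemma key_sum (m d k : ℕ) :
    hc m (d+1) (k+1) - (m:ℚ) * hc m (d+1) k = hc m d (k+1) - ((m:ℚ)-1) * hc m d k := by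
  -- e1 : difference of the two (k+1)-sums
  have e1 : hc m (d+1) (k+1) - hc m d (k+1)
      = ∑ r ∈ Finset.range (k+2),
          ((k+1).choose r : ℚ) * ((m:ℚ)-1)^r * ((k+1-r+d).choose (k+1-r) : ℚ) := by
    unfold hc
    rw [← Finset.sum_sub_distrib]
    apply Finset.sum_congr rfl
    intro r hr
    have hr' : r ≤ k + 1 := Nat.lt_succ_iff.mp (Finset.mem_range.mp hr)
    have h2 : k + 1 - r + (d+1) = (k + 1 - r + d) + 1 := by omega
    have hP : ((k+1-r+d+1).choose (k+1-r+1) : ℚ)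
        = ((k+1-r+d).choose (k+1-r) : ℚ) + ((k+1-r+d).choose (k+1-r+1) : ℚ) := by
      exact_mod_cast congrArg (Nat.cast (R := ℚ)) (Nat.choose_succ_succ (k+1-r+d) (k+1-r))
    rw [h2, hP]
    ring
  have e2 : (m:ℚ) * hc m (d+1) k - ((m:ℚ)-1) * hc m d k
      = ∑ r ∈ Finset.range (k+1),
          (k.choose r : ℚ) * ((m:ℚ)-1)^r *
            (((k-r+d+1).choose (k-r+1) : ℚ) + ((m:ℚ)-1) * ((k-r+d).choose (k-r) : ℚ)) := by
    unfold hc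
    rw [Finset.mul_sum, Finset.mul_sum, ← Finset.sum_sub_distrib]
    apply Finset.sum_congr rfl
    intro r hr
    have hP : ((k-r+d+1).choose (k-r+1) : ℚ)
        = ((k-r+d).choose (k-r) : ℚ) + ((k-r+d).choose (k-r+1) : ℚ) := by
      exact_mod_cast congrArg (Nat.cast (R := ℚ)) (Nat.choose_succ_succ (k-r+d) (k-r))
    have h2 : k - r + (d+1) = k - r + d + 1 := by omega
    rw [h2, hP]
    ring
  have e3 : ∑ r ∈ Finset.range (k+2),
          ((k+1).choose r : ℚ) * ((m:ℚ)-1)^r * ((k+1-r+d).choose (k+1-r) : ℚ)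
      = ∑ r ∈ Finset.range (k+1),
          (k.choose r : ℚ) * ((m:ℚ)-1)^r *
            (((k-r+d+1).choose (k-r+1) : ℚ) + ((m:ℚ)-1) * ((k-r+d).choose (k-r) : ℚ)) := by
    -- LHS : peel off r = 0
    rw [Finset.sum_range_succ' (fun r => ((k+1).choose r : ℚ) * ((m:ℚ)-1)^r * ((k+1-r+d).choose (k+1-r) : ℚ)) (k+1)]
    -- now LHS = ∑_{r<k+1} f (r+1) + f 0
    have hL : ∀ r, ((k+1).choose (r+1) : ℚ) * ((m:ℚ)-1)^(r+1) * ((k+1-(r+1)+d).choose (k+1-(r+1)) : ℚ)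
        = ((k.choose r : ℚ) + (k.choose (r+1) : ℚ)) * ((m:ℚ)-1)^(r+1) * ((k-r+d).choose (k-r) : ℚ) := by
      intro r
      have h1 : k + 1 - (r+1) = k - r := by omega
      have h2 : ((k+1).choose (r+1) : ℚ) = (k.choose r : ℚ) + (k.choose (r+1) : ℚ) := by
        exact_mod_cast congrArg (Nat.cast (R := ℚ)) (Nat.choose_succ_succ k r)
      rw [h1, h2]
    simp only [hL]
    -- RHS : split and peel
    have hR : ∑ r ∈ Finset.range (k+1),
          (k.choose r : ℚ) * ((m:ℚ)-1)^r *
            (((k-r+d+1).choose (k-r+1) : ℚ) + ((m:ℚ)-1) * ((k-r+d).choose (k-r) : ℚ))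
        = (∑ r ∈ Finset.range (k+1), (k.choose r : ℚ) * ((m:ℚ)-1)^r * ((k-r+d+1).choose (k-r+1) : ℚ))
          + ∑ r ∈ Finset.range (k+1), (k.choose r : ℚ) * ((m:ℚ)-1)^(r+1) * ((k-r+d).choose (k-r) : ℚ) := by
      rw [← Finset.sum_add_distrib]
      apply Finset.sum_congr rfl
      intro r _
      ring
    rw [hR]
    -- peel r = 0 from first RHS sum
    rw [Finset.sum_range_succ' (fun r => (k.choose r : ℚ) * ((m:ℚ)-1)^r * ((k-r+d+1).choose (k-r+1) : ℚ)) k]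
    have hR2 : ∀ r ∈ Finset.range k,
        (k.choose (r+1) : ℚ) * ((m:ℚ)-1)^(r+1) * ((k-(r+1)+d+1).choose (k-(r+1)+1) : ℚ)
        = (k.choose (r+1) : ℚ) * ((m:ℚ)-1)^(r+1) * ((k-r+d).choose (k-r) : ℚ) := by
      intro r hr
      have hr' : r < k := Finset.mem_range.mp hr
      have h1 : k - (r+1) + d + 1 = k - r + d := by omega
      have h2 : k - (r+1) + 1 = k - r := by omega
      rw [h1, h2]
    rw [Finset.sum_congr rfl hR2]
    -- expand (choose k r + choose k (r+1)) on LHS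
    have hL2 : ∑ r ∈ Finset.range (k+1),
        ((k.choose r : ℚ) + (k.choose (r+1) : ℚ)) * ((m:ℚ)-1)^(r+1) * ((k-r+d).choose (k-r) : ℚ)
        = (∑ r ∈ Finset.range (k+1), (k.choose r : ℚ) * ((m:ℚ)-1)^(r+1) * ((k-r+d).choose (k-r) : ℚ))
          + ∑ r ∈ Finset.range (k+1), (k.choose (r+1) : ℚ) * ((m:ℚ)-1)^(r+1) * ((k-r+d).choose (k-r) : ℚ) := by
      rw [← Finset.sum_add_distrib]
      apply Finset.sum_congr rfl
      intro r _
      ring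
    rw [hL2]
    -- last sum on LHS: drop the r = k term (choose k (k+1) = 0)
    have hL3 : ∑ r ∈ Finset.range (k+1), (k.choose (r+1) : ℚ) * ((m:ℚ)-1)^(r+1) * ((k-r+d).choose (k-r) : ℚ)
        = ∑ r ∈ Finset.range k, (k.choose (r+1) : ℚ) * ((m:ℚ)-1)^(r+1) * ((k-r+d).choose (k-r) : ℚ) := by
      rw [Finset.sum_range_succ]
      simp [Nat.choose_succ_self]
    rw [hL3]
    have hc1 : k + 1 - 0 + d = k - 0 + d + 1 := by omega
    have hc2 : k + 1 - 0 = k - 0 + 1 := by omega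
    rw [hc1, hc2]
    simp only [Nat.choose_zero_right, Nat.cast_one]
    ring
  linarith [e1, e2, e3]


lemma Fser_zero (m : ℕ) : Fser m 0 = 1 := by
  ext n
  rw [Fser, coeff_mk, coeff_one]
  rcases n with _ | n
  · simp
  · simp [hc_zero]

lemma step (m d : ℕ) :
    (1 - (m : PowerSeries ℚ) * X) * Fser m (d+1)
      = (1 - ((m : PowerSeries ℚ) - 1) * X) * Fser m d := by
  have hC : (m : PowerSeries ℚ) = C (m : ℚ) := by
    simp [map_natCast]
  have hC1 : ((m : PowerSeries ℚ) - 1) = C ((m : ℚ) - 1) := by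
    rw [hC]; simp
  ext n
  rw [hC, show ((C (m:ℚ)) - 1 : PowerSeries ℚ) = C ((m:ℚ)-1) by simp]
  simp only [sub_mul, one_mul, mul_assoc, map_sub, PowerSeries.coeff_C_mul]
  rcases n with _ | n
  · simp [Fser]
  · rw [PowerSeries.coeff_succ_X_mul, PowerSeries.coeff_succ_X_mul]
    simp only [Fser, coeff_mk, Nat.succ_ne_zero, if_false, Nat.add_sub_cancel]
    rcases n with _ | k
    · simp only [if_pos rfl]
      rw [hc_k_zero, hc_k_zero]
      push_cast
      ring
    · simp only [Nat.succ_ne_zero, if_false, Nat.add_sub_cancel]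
      linarith [key_sum m d k]

lemma pow_step (m : ℕ) : ∀ d : ℕ,
    (1 - (m : PowerSeries ℚ) * X) ^ d * Fser m d
      = (1 - ((m : PowerSeries ℚ) - 1) * X) ^ d
  | 0 => by simpa using Fser_zero m
  | (d+1) => by
    have h1 := step m d
    have h2 := pow_step m d
    calc (1 - (m : PowerSeries ℚ) * X) ^ (d+1) * Fser m (d+1)
        = (1 - (m : PowerSeries ℚ) * X) ^ d * ((1 - (m : PowerSeries ℚ) * X) * Fser m (d+1)) := by ring
      _ = (1 - (m : PowerSeries ℚ) * X) ^ d * ((1 - ((m : PowerSeries ℚ) - 1) * X) * Fser m d) := by rw [h1]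
      _ = (1 - ((m : PowerSeries ℚ) - 1) * X) * ((1 - (m : PowerSeries ℚ) * X) ^ d * Fser m d) := by ring
      _ = (1 - ((m : PowerSeries ℚ) - 1) * X) ^ (d+1) := by rw [h2]; ring



/-- bounded monotone sequences -/
def MB (M N : ℕ) : Type := {c : Fin M → ℕ // Monotone c ∧ ∀ k, c k ≤ N}

instance (M N : ℕ) : Finite (MB M N) := by
  apply Finite.of_injective (fun c : MB M N => (fun k => (⟨c.1 k, Nat.lt_succ_of_le (c.2.2 k)⟩ : Fin (N+1))))
  intro c c' h
  apply Subtype.ext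
  funext k
  exact congrArg Fin.val (congrFun h k)

lemma monotone_snoc {M : ℕ} {c : Fin M → ℕ} {v : ℕ} (hc : Monotone c) (hb : ∀ k, c k ≤ v) :
    Monotone (Fin.snoc c v : Fin (M+1) → ℕ) := by
  intro x y hxy
  induction y using Fin.lastCases with
  | last =>
    rw [Fin.snoc_last]
    induction x using Fin.lastCases with
    | last => rw [Fin.snoc_last]
    | cast i => rw [Fin.snoc_castSucc]; exact hb i
  | cast j =>
    induction x using Fin.lastCases with
    | last => exact absurd (lt_of_le_of_lt hxy (Fin.castSucc_lt_last j)) (lt_irrefl _)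
    | cast i =>
      rw [Fin.snoc_castSucc, Fin.snoc_castSucc]
      exact hc (Fin.castSucc_le_castSucc_iff.mp hxy)

def mbEquiv (M N : ℕ) : MB (M+1) N ≃ Σ v : Fin (N+1), MB M v where
  toFun c := ⟨⟨c.1 (Fin.last M), Nat.lt_succ_of_le (c.2.2 _)⟩,
    ⟨Fin.init c.1, fun x y hxy => c.2.1 (Fin.castSucc_le_castSucc_iff.mpr hxy),
      fun k => c.2.1 (Fin.castSucc_lt_last k).le⟩⟩
  invFun p := ⟨Fin.snoc p.2.1 p.1.1, monotone_snoc p.2.2.1 p.2.2.2,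
    fun k => by
      induction k using Fin.lastCases with
      | last => rw [Fin.snoc_last]; exact Nat.lt_succ_iff.mp p.1.2
      | cast i => rw [Fin.snoc_castSucc]; exact (p.2.2.2 i).trans (Nat.lt_succ_iff.mp p.1.2)⟩
  left_inv c := by
    apply Subtype.ext
    exact Fin.snoc_init_self c.1
  right_inv p := by
    rcases p with ⟨v, c⟩
    have h1 : (Fin.snoc c.1 v.1 : Fin (M+1) → ℕ) (Fin.last M) = v.1 := Fin.snoc_last _ _
    apply Sigma.ext
    · exact Fin.ext h1
    · refine Subtype.heq_iff_coe_eq ?_ |>.mpr ?_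
      · intro x
        simp only [Fin.snoc_last]
      · simp only [Fin.init_snoc]

lemma nat_card_sigma {ι : Type*} [Fintype ι] (f : ι → Type*) [∀ i, Finite (f i)] :
    Nat.card (Σ i, f i) = ∑ i, Nat.card (f i) := by
  letI := fun i => Fintype.ofFinite (f i)
  simp_rw [Nat.card_eq_fintype_card]
  exact Fintype.card_sigma

lemma card_MB : ∀ M N : ℕ, Nat.card (MB M N) = (N + M).choose M := by
  intro M
  induction M with
  | zero =>
    intro N
    have : Nat.card (MB 0 N) = 1 := by
      rw [Nat.card_eq_one_iff_unique]
      constructor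
      · constructor
        intro a b
        apply Subtype.ext
        funext k
        exact absurd k.2 (Nat.not_lt_zero _)
      · exact ⟨⟨fun k => 0, monotone_const, fun k => Nat.zero_le _⟩⟩
    simp [this]
  | succ M ih =>
    intro N
    rw [Nat.card_congr (mbEquiv M N), nat_card_sigma]
    have : ∀ v : Fin (N+1), Nat.card (MB M v.1) = ((v:ℕ) + M).choose M := fun v => ih v.1
    rw [Finset.sum_congr rfl (fun v _ => this v)]
    rw [Fin.sum_univ_eq_sum_range (fun i => (i + M).choose M) (N+1)]
    rw [Nat.sum_range_add_choose N M]
    congr 1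



/-- monotone 0/1 sequences of length M+1 ending in 1 -/
def G1 (M : ℕ) : Type :=
  {g : Fin (M+1) → ℕ // Monotone g ∧ (∀ k, g k ≤ 1) ∧ g (Fin.last M) = 1}

def g1Equiv (M : ℕ) : Fin (M+1) ≃ G1 M where
  toFun j := ⟨fun k => if j ≤ k then 1 else 0,
    by
      intro x y hxy
      show (if j ≤ x then 1 else 0 : ℕ) ≤ (if j ≤ y then 1 else 0 : ℕ)
      by_cases h : j ≤ x
      · rw [if_pos h, if_pos (h.trans hxy)]
      · rw [if_neg h]
        exact Nat.zero_le _,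
    fun k => by show (if j ≤ k then 1 else 0 : ℕ) ≤ 1; split <;> omega,
    by show (if j ≤ Fin.last M then 1 else 0 : ℕ) = 1; rw [if_pos (Fin.le_last j)]⟩
  invFun g := (univ.filter (fun k => g.1 k = 1)).min' ⟨Fin.last M, by simp [g.2.2.2]⟩
  left_inv j := by
    apply le_antisymm
    · apply Finset.min'_le
      simp
    · apply Finset.le_min'
      intro y hy
      simp only [Finset.mem_filter, Finset.mem_univ, true_and] at hy
      by_contra h
      rw [if_neg (by omega)] at hy
      omega
  right_inv g := by
    apply Subtype.ext
    funext k
    obtain ⟨hmono, hle, hlast⟩ := g.2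
    set s := univ.filter (fun k => g.1 k = 1) with hs
    have hne : s.Nonempty := ⟨Fin.last M, by simp [hs, hlast]⟩
    show (if s.min' _ ≤ k then 1 else 0 : ℕ) = g.1 k
    by_cases h : s.min' hne ≤ k
    · rw [if_pos h]
      have h1 : g.1 (s.min' hne) = 1 :=
        (Finset.mem_filter.mp (Finset.min'_mem s hne)).2
      have := hmono h
      have := hle k
      omega
    · rw [if_neg h]
      by_contra hk
      have hk1 : g.1 k = 1 := by have := hle k; omega
      exact h (Finset.min'_le s k (by simp [hs, hk1]))

instance (M : ℕ) : Finite (G1 M) := Finite.of_equiv _ (g1Equiv M)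

lemma card_G1 (M : ℕ) : Nat.card (G1 M) = M + 1 := by
  rw [← Nat.card_congr (g1Equiv M), Nat.card_eq_fintype_card, Fintype.card_fin]



/-- intermediate form -/
def W (M L : ℕ) : Type :=
  {w : (Fin L → (Fin (M+1) → ℕ)) × (Fin (M+1) → ℕ) //
    (∀ i, Monotone (w.1 i)) ∧ (∀ i k, w.1 i k ≤ 1) ∧ Monotone w.2 ∧
    (∑ i, w.1 i (Fin.last M)) + w.2 (Fin.last M) ≤ L+1}

def eAB (M L : ℕ) :
    {e : Fin (M+1) → (Fin (L+1) → ℕ) // Monotone e ∧ ∀ k, e k ∈ Ptn (L+1)} ≃ W M L where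
  toFun e := ⟨(fun i k => e.1 k i.castSucc, fun k => e.1 k (Fin.last L)),
    fun i _ _ h => (e.2.1 h) _,
    fun i k => (e.2.2 k).1 i.castSucc (by simpa using i.2),
    fun _ _ h => (e.2.1 h) _,
    by
      have h := (e.2.2 (Fin.last M)).2
      rwa [Fin.sum_univ_castSucc] at h⟩
  invFun w := ⟨fun k => Fin.snoc (fun i => w.1.1 i k) (w.1.2 k),
    by
      intro x y hxy
      intro j
      induction j using Fin.lastCases with
      | last => simp only [Fin.snoc_last]; exact w.2.2.2.1 hxy
      | cast i => simp only [Fin.snoc_castSucc]; exact w.2.1 i hxy,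
    by
      intro k
      constructor
      · intro j hj
        induction j using Fin.lastCases with
        | last => simp at hj
        | cast i => simp only [Fin.snoc_castSucc]; exact w.2.2.1 i k
      · rw [Fin.sum_univ_castSucc]
        simp only [Fin.snoc_castSucc, Fin.snoc_last]
        refine le_trans (add_le_add (Finset.sum_le_sum fun i _ => w.2.1 i (Fin.le_last k))
          (w.2.2.2.1 (Fin.le_last k))) w.2.2.2.2⟩
  left_inv e := by
    apply Subtype.ext
    funext k
    exact Fin.snoc_init_self (e.1 k)
  right_inv w := by
    apply Subtype.ext
    apply Prod.ext
    · funext i k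
      simp only [Fin.snoc_castSucc]
    · funext k
      simp only [Fin.snoc_last]

def suppMap (M L : ℕ) (w : W M L) : Finset (Fin L) :=
  univ.filter (fun i => w.1.1 i (Fin.last M) = 1)

noncomputable def eFiber (M L : ℕ) (s : Finset (Fin L)) :
    {w : W M L // suppMap M L w = s} ≃ ((s → Fin (M+1)) × MB (M+1) (L+1 - s.card)) where
  toFun ww := by
    refine ⟨fun i => (g1Equiv M).symm ⟨ww.1.1.1 i.1, ww.1.2.1 i.1, ww.1.2.2.1 i.1, ?_⟩,
      ⟨ww.1.1.2, ww.1.2.2.2.1, ?_⟩⟩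
    · have hi : (i : Fin L) ∈ suppMap M L ww.1 := by rw [ww.2]; exact i.2
      exact (Finset.mem_filter.mp hi).2
    · -- bound on the last coordinate chain
      intro k
      have hsum : (∑ i, ww.1.1.1 i (Fin.last M)) = s.card := by
        have hv : ∀ i, ww.1.1.1 i (Fin.last M) = if i ∈ s then 1 else 0 := by
          intro i
          by_cases hi : i ∈ s
          · rw [if_pos hi, ← ww.2] at *
            exact (Finset.mem_filter.mp hi).2
          · rw [if_neg hi]
            have h1 : ww.1.1.1 i (Fin.last M) ≠ 1 := by
              intro hcon
              exact hi (ww.2 ▸ Finset.mem_filter.mpr ⟨Finset.mem_univ i, hcon⟩)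
            have h2 := ww.1.2.2.1 i (Fin.last M)
            omega
        rw [Finset.sum_congr rfl (fun i _ => hv i), Finset.sum_ite_mem,
          Finset.univ_inter, Finset.sum_const, smul_eq_mul, mul_one]
      have htot := ww.1.2.2.2.2
      rw [hsum] at htot
      have hk := ww.1.2.2.2.1 (Fin.le_last k)
      omega
  invFun p := by
    refine ⟨⟨(fun i => if h : i ∈ s then ((g1Equiv M) (p.1 ⟨i, h⟩)).1 else fun _ => 0, p.2.1),
      ?_, ?_, p.2.2.1, ?_⟩, ?_⟩
    · intro i
      by_cases h : i ∈ s
      · simp only [dif_pos h]; exact ((g1Equiv M) (p.1 ⟨i, h⟩)).2.1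
      · simp only [dif_neg h]; exact monotone_const
    · intro i k
      by_cases h : i ∈ s
      · simp only [dif_pos h]; exact ((g1Equiv M) (p.1 ⟨i, h⟩)).2.2.1 k
      · simp only [dif_neg h]; exact Nat.zero_le _
    · have hv : ∀ i : Fin L, (if h : i ∈ s then ((g1Equiv M) (p.1 ⟨i, h⟩)).1 else fun _ => 0)
          (Fin.last M) = if i ∈ s then 1 else 0 := by
        intro i
        by_cases h : i ∈ s
        · rw [dif_pos h, if_pos h]; exact ((g1Equiv M) (p.1 ⟨i, h⟩)).2.2.2
        · rw [dif_neg h, if_neg h]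
      rw [Finset.sum_congr rfl (fun i _ => hv i), Finset.sum_ite_mem,
        Finset.univ_inter, Finset.sum_const, smul_eq_mul, mul_one]
      have hcard : s.card ≤ L := by
        simpa using Finset.card_le_univ s
      have hb := p.2.2.2 (Fin.last M)
      show s.card + p.2.1 (Fin.last M) ≤ L + 1
      omega
    · -- support is s
      unfold suppMap
      ext i
      simp only [Finset.mem_filter, Finset.mem_univ, true_and]
      by_cases h : i ∈ s
      · rw [dif_pos h]
        simp only [h, iff_true]
        exact ((g1Equiv M) (p.1 ⟨i, h⟩)).2.2.2
      · rw [dif_neg h]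
        simp [h]
  left_inv ww := by
    apply Subtype.ext
    apply Subtype.ext
    apply Prod.ext
    · funext i
      by_cases h : i ∈ s
      · simp only [dif_pos h, Equiv.apply_symm_apply]
        exact congrArg Subtype.val ((g1Equiv M).apply_symm_apply _)
      · simp only [dif_neg h]
        funext k
        have h1 : ww.1.1.1 i (Fin.last M) ≠ 1 := by
          intro hcon
          exact h (ww.2 ▸ Finset.mem_filter.mpr ⟨Finset.mem_univ i, hcon⟩)
        have h2 := ww.1.2.2.1 i (Fin.last M)
        have h3 := ww.1.2.1 i (Fin.le_last k)
        omega
    · rfl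
  right_inv p := by
    apply Prod.ext
    · funext i
      refine (Equiv.symm_apply_eq _).mpr ?_
      apply Subtype.ext
      show (if h : (i : Fin L) ∈ s then ((g1Equiv M) (p.1 ⟨i, h⟩)).1 else fun _ => 0) = _
      rw [dif_pos i.2]
    · exact Subtype.ext rfl


lemma count_formula (M L : ℕ) :
    Nat.card {e : Fin (M+1) → (Fin (L+1) → ℕ) // Monotone e ∧ ∀ k, e k ∈ Ptn (L+1)}
      = ∑ r ∈ Finset.range (L+1),
          L.choose r * ((M+1)^r * ((L + 1 - r + (M+1)).choose (M+1))) := by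
  rw [Nat.card_congr (eAB M L)]
  rw [Nat.card_congr (Equiv.sigmaFiberEquiv (suppMap M L)).symm]
  letI : ∀ s : Finset (Fin L), Finite {w : W M L // suppMap M L w = s} :=
    fun s => Finite.of_equiv _ (eFiber M L s).symm
  rw [nat_card_sigma]
  have hterm : ∀ s : Finset (Fin L), Nat.card {w : W M L // suppMap M L w = s}
      = (M+1)^s.card * ((L + 1 - s.card + (M+1)).choose (M+1)) := by
    intro s
    rw [Nat.card_congr (eFiber M L s), Nat.card_prod, Nat.card_fun, card_MB,
      Nat.card_eq_fintype_card, Nat.card_eq_fintype_card, Fintype.card_fin, Fintype.card_coe]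
  rw [Finset.sum_congr rfl (fun s _ => hterm s)]
  rw [← Finset.powerset_univ]
  rw [Finset.sum_powerset_apply_card
    (fun r => (M+1)^r * ((L + 1 - r + (M+1)).choose (M+1)))]
  rw [Finset.card_univ, Fintype.card_fin]
  exact Finset.sum_congr rfl (fun r _ => by rw [smul_eq_mul])

lemma zcount_eq (m n : ℕ) (hm : 2 ≤ m) (hn : 1 ≤ n) : (Zcount n m : ℚ) = hc m m (n-1) := by
  obtain ⟨M, rfl⟩ : ∃ M, m = M + 2 := ⟨m - 2, by omega⟩
  obtain ⟨L, rfl⟩ : ∃ L, n = L + 1 := ⟨n - 1, by omega⟩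
  have h1 : Zcount (L+1) (M+2) = ∑ r ∈ Finset.range (L+1),
      L.choose r * ((M+1)^r * ((L + 1 - r + (M+1)).choose (M+1))) := count_formula M L
  rw [h1, hc]
  rw [Nat.cast_sum]
  apply Finset.sum_congr rfl
  intro r hr
  have hr' : r ≤ L := Nat.lt_succ_iff.mp (Finset.mem_range.mp hr)
  have e2 : (L + 1 - r + (M+1)).choose (M+1) = (L - r + (M+2)).choose (L - r + 1) := by
    have e1 : L + 1 - r + (M+1) = L - r + (M+2) := by omega
    rw [e1, ← Nat.choose_symm (show M + 1 ≤ L - r + (M+2) by omega)]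
    congr 1
    omega
  rw [e2]
  push_cast
  ring

lemma mk_eq (m : ℕ) (hm : 2 ≤ m) :
    PowerSeries.mk (fun n => if n = 0 then 1 else (Zcount n m : ℚ)) = Fser m m := by
  ext n
  rw [Fser, coeff_mk, coeff_mk]
  by_cases hn : n = 0
  · simp [hn]
  · simp only [hn, if_false]
    exact zcount_eq m n hm (by omega)

end Stmt1Aux

/-- Fix `m ≥ 2`. In `ℚ[[s]]` one has
`(1 - m s)^m * (1 + ∑_{n ≥ 1} Z_n(m) sⁿ) = (1 + s - m s)^m`, where the power series
`PowerSeries.mk (fun n => if n = 0 then 1 else Z_n(m))` is `1 + ∑_{n ≥ 1} Z_n(m) sⁿ`. -/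
theorem stmt1 (m : ℕ) (hm : 2 ≤ m) :
    (1 - (m : PowerSeries ℚ) * PowerSeries.X) ^ m *
      PowerSeries.mk (fun n => if n = 0 then 1 else (Zcount n m : ℚ)) =
    (1 + PowerSeries.X - (m : PowerSeries ℚ) * PowerSeries.X) ^ m := by
  rw [Stmt1Aux.mk_eq m hm, Stmt1Aux.pow_step m m]
  congr 1
  ring
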